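/- For fixed β > 0, the function F^R(L) = √(β/2)·(1 − e^{−L√(2β)})/sinh(L√(2β)) is strictly decreasing in L on (0, ∞) and tends to 0 as L → ∞. -/

import Mathlib

open Real Filter Set

lemma casimir_key (x : ℝ) (hx : 0 < x) :
    (1 - Real.exp (-x)) / Real.sinh x = 2 / (Real.exp x + 1) := by
  rw [Real.sinh_eq, Real.exp_neg]
  have he : 1 < Real.exp x := by nlinarith [Real.add_one_le_exp x]
  have h0 : 0 < Real.exp x := Real.exp_pos x
  have hne : Real.exp x - (Real.exp x)⁻¹ ≠ 0 := by
    have hinv : (Real.exp x)⁻¹ < 1 := by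
      rw [inv_lt_one_iff₀]; right; exact he
    nlinarith
  have hpos : 0 < -Real.exp x + Real.exp x ^ 3 := by
    have := mul_pos (mul_pos h0 (sub_pos.mpr he)) (by linarith : 0 < Real.exp x + 1)
    nlinarith
  have hne2 : -Real.exp x + Real.exp x ^ 3 ≠ 0 := hpos.ne'
  field_simp
  ring_nf
  have hmc : (-Real.exp x + Real.exp x ^ 3) * (-Real.exp x + Real.exp x ^ 3)⁻¹ = 1 :=
    mul_inv_cancel₀ hne2
  have hmc2 : (-1 + Real.exp x ^ 2) * (-1 + Real.exp x ^ 2)⁻¹ = 1 :=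
    mul_inv_cancel₀ (by nlinarith)
  linear_combination hmc2

theorem casimir_force_reflecting_decreasing (β : ℝ) (hβ : 0 < β) :
    StrictAntiOn
      (fun L : ℝ =>
        Real.sqrt (β/2) * (1 - Real.exp (-(L * Real.sqrt (2*β)))) / Real.sinh (L * Real.sqrt (2*β)))
      (Ioi 0) ∧
    Tendsto
      (fun L : ℝ =>
        Real.sqrt (β/2) * (1 - Real.exp (-(L * Real.sqrt (2*β)))) / Real.sinh (L * Real.sqrt (2*β)))
      atTop (nhds 0) := by
  set s := Real.sqrt (2*β) with hs_def
  set c := Real.sqrt (β/2) with hc_def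
  have hs : 0 < s := Real.sqrt_pos.mpr (by linarith)
  have hc : 0 < c := Real.sqrt_pos.mpr (by linarith)
  have hkey : ∀ L : ℝ, 0 < L →
      c * (1 - Real.exp (-(L * s))) / Real.sinh (L * s) = c * (2 / (Real.exp (L * s) + 1)) := by
    intro L hL
    rw [mul_div_assoc, casimir_key _ (mul_pos hL hs)]
  constructor
  · intro a ha b hb hab
    simp only [mem_Ioi] at ha hb
    simp only
    rw [hkey a ha, hkey b hb]
    have hexp : Real.exp (a * s) < Real.exp (b * s) :=
      Real.exp_lt_exp.mpr (by nlinarith)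
    have h1 : 0 < Real.exp (a * s) + 1 := by positivity
    gcongr
  · have h1 : Tendsto (fun L : ℝ => L * s) atTop atTop :=
      Tendsto.atTop_mul_const hs tendsto_id
    have h2 : Tendsto (fun L : ℝ => Real.exp (L * s) + 1) atTop atTop :=
      (Real.tendsto_exp_atTop.comp h1).atTop_add tendsto_const_nhds
    have h3 : Tendsto (fun L : ℝ => c * (2 / (Real.exp (L * s) + 1))) atTop (nhds 0) := by
      have := (tendsto_const_nhds (x := (2:ℝ)) (f := atTop)).div_atTop h2
      simpa using this.const_mul c
    refine h3.congr' ?_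
    filter_upwards [eventually_gt_atTop 0] with L hL
    exact (hkey L hL).symm
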